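/- Under the PIGD setup, assume additionally that F is coercive, argmin F is nonempty, 0 < inf_k β_k ≤ β_k ≤ β_0 < 1 for all k, and F satisfies the optimal strong convexity condition with constant ν > 0. Then F(x^k) − min F converges linearly: there exist ω ∈ (0,1) and C > 0 such that F(x^k) − min F ≤ C ω^k for all k. -/

import Mathlib

open InnerProductSpace Set Filter Topology

local notation "⟪" x ", " y "⟫" => @inner ℝ _ _ x y

variable {E : Type*} [NormedAddCommGroup E] [InnerProductSpace ℝ E] [CompleteSpace E]

lemma pigd_line_deriv (f : E → ℝ) (v : E) (x d : E) (t : ℝ)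
    (hx : HasGradientAt f v (x + t • d)) :
    HasDerivAt (fun s : ℝ => f (x + s • d)) ⟪v, d⟫ t := by
  have hline : HasDerivAt (fun s : ℝ => x + s • d) d t := by
    simpa using ((hasDerivAt_id t).smul_const d).const_add x
  have := hx.hasFDerivAt.comp_hasDerivAt t hline
  simpa [InnerProductSpace.toDual_apply_apply, Function.comp_def] using this

lemma pigd_convex_grad (f : E → ℝ) (hfconv : ConvexOn ℝ Set.univ f)
    {v x : E} (hx : HasGradientAt f v x) (z : E) :
    f x + ⟪v, z - x⟫ ≤ f z := by
  set φ : ℝ → ℝ := fun t => f (x + t • (z - x)) with hφdef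
  have hφ0 : φ 0 = f x := by simp [hφdef]
  have hφ : HasDerivAt φ ⟪v, z - x⟫ 0 := by
    apply pigd_line_deriv
    simpa using hx
  have hslope : Tendsto (slope φ 0) (𝓝[>] 0) (𝓝 ⟪v, z - x⟫) := by
    refine (hasDerivAt_iff_tendsto_slope.mp hφ).mono_left ?_
    exact nhdsWithin_mono 0 (fun t ht => ne_of_gt ht)
  have hbound : ∀ᶠ t in 𝓝[>] (0:ℝ), slope φ 0 t ≤ f z - f x := by
    filter_upwards [Ioc_mem_nhdsGT_of_mem ⟨le_refl 0, zero_lt_one⟩] with t ht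
    have hconv := hfconv.2 (Set.mem_univ x) (Set.mem_univ z)
      (by linarith [ht.2] : (0:ℝ) ≤ 1 - t) (le_of_lt ht.1) (by ring)
    have hpt : (1 - t) • x + t • z = x + t • (z - x) := by
      rw [sub_smul, smul_sub, one_smul]; abel
    rw [hpt] at hconv
    have h1 : φ t ≤ f x + t * (f z - f x) := by
      have : (1 - t) * f x + t * f z = f x + t * (f z - f x) := by ring
      simpa [hφdef, this] using hconv
    have : slope φ 0 t = (φ t - f x) / t := by
      rw [slope_def_field]; simp [hφ0]
    rw [this, div_le_iff₀ ht.1]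
    linarith
  have := le_of_tendsto hslope hbound
  linarith

lemma pigd_descent (f : E → ℝ) (f' : E → E) (L : ℝ) (hL : 0 < L)
    (hf' : ∀ x, HasGradientAt f (f' x) x)
    (hlip : ∀ x y, ‖f' x - f' y‖ ≤ L * ‖x - y‖) (x y : E) :
    f y ≤ f x + ⟪f' x, y - x⟫ + L / 2 * ‖y - x‖ ^ 2 := by
  set d := y - x with hd
  set φ : ℝ → ℝ := fun t => f (x + t • d) with hφdef
  set ψ : ℝ → ℝ := fun t => ⟪f' (x + t • d), d⟫ with hψdef
  have hφ : ∀ t : ℝ, HasDerivAt φ (ψ t) t := fun t =>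
    pigd_line_deriv f (f' (x + t • d)) x d t (hf' _)
  have hcontf' : Continuous f' := by
    have : LipschitzWith (Real.toNNReal L) f' := by
      apply LipschitzWith.of_dist_le_mul
      intro a b
      rw [dist_eq_norm, dist_eq_norm, Real.coe_toNNReal L hL.le]
      exact hlip a b
    exact this.continuous
  have hψcont : Continuous ψ := by
    apply Continuous.inner
    · exact hcontf'.comp (continuous_const.add (continuous_id.smul continuous_const))
    · exact continuous_const
  have hint : ∫ t in (0:ℝ)..1, ψ t = φ 1 - φ 0 :=
    intervalIntegral.integral_eq_sub_of_hasDerivAt (fun t _ => hφ t)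
      (hψcont.intervalIntegrable 0 1)
  have hmono : ∫ t in (0:ℝ)..1, ψ t ≤ ∫ t in (0:ℝ)..1, (⟪f' x, d⟫ + L * ‖d‖ ^ 2 * t) := by
    apply intervalIntegral.integral_mono_on zero_le_one (hψcont.intervalIntegrable 0 1)
    · exact ((continuous_const.add (continuous_const.mul continuous_id')).intervalIntegrable 0 1)
    · intro t ht
      have h1 : ψ t - ⟪f' x, d⟫ = ⟪f' (x + t • d) - f' x, d⟫ := by
        rw [inner_sub_left]
      have h2 : ⟪f' (x + t • d) - f' x, d⟫ ≤ ‖f' (x + t • d) - f' x‖ * ‖d‖ :=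
        real_inner_le_norm _ _
      have h3 : ‖f' (x + t • d) - f' x‖ ≤ L * (t * ‖d‖) := by
        have := hlip (x + t • d) x
        simpa [norm_smul, abs_of_nonneg ht.1] using this
      have h4 : ‖f' (x + t • d) - f' x‖ * ‖d‖ ≤ L * (t * ‖d‖) * ‖d‖ :=
        mul_le_mul_of_nonneg_right h3 (norm_nonneg d)
      nlinarith [norm_nonneg d]
  have hval : ∫ t in (0:ℝ)..1, (⟪f' x, d⟫ + L * ‖d‖ ^ 2 * t) = ⟪f' x, d⟫ + L / 2 * ‖d‖ ^ 2 := by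
    rw [intervalIntegral.integral_add (f := fun _ => ⟪f' x, d⟫) (g := fun t => L * ‖d‖ ^ 2 * t)
      (intervalIntegrable_const)
      ((continuous_const.mul continuous_id').intervalIntegrable 0 1),
      intervalIntegral.integral_const_mul, integral_id]
    simp
    ring
  have hφ1 : φ 1 = f y := by simp [hφdef, hd]
  have hφ0 : φ 0 = f x := by simp [hφdef]
  rw [hφ1, hφ0] at hint
  linarith [hint ▸ hmono, hval ▸ hmono]

lemma pigd_prox_ineq (g : E → ℝ) (hg : ConvexOn ℝ Set.univ g) {γ : ℝ} (hγ : 0 < γ)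
    {y p : E} (hmin : IsMinOn (fun z => ‖z - y‖ ^ 2 / (2 * γ) + g z) Set.univ p) (z : E) :
    g p + ‖p - y‖ ^ 2 / (2 * γ) + ‖z - p‖ ^ 2 / (2 * γ)
      ≤ g z + ‖z - y‖ ^ 2 / (2 * γ) := by
  set A := ‖p - y‖ ^ 2 with hA
  set N := ‖z - p‖ ^ 2 with hN
  set I := ⟪p - y, z - p⟫ with hI
  have h2γ : (0:ℝ) < 2 * γ := by linarith
  have hzy : ‖z - y‖ ^ 2 = A + 2 * I + N := by
    have hsplit : z - y = (p - y) + (z - p) := by abel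
    rw [hsplit, norm_add_sq_real]
  have key : ∀ t : ℝ, t ∈ Set.Ioo (0:ℝ) 1 →
      g p + A / (2 * γ) + N / (2 * γ)
        ≤ g z + ‖z - y‖ ^ 2 / (2 * γ) + t * (N / (2 * γ)) := by
    intro t ht
    set w := p + t • (z - p) with hw
    have hmin' : ‖p - y‖ ^ 2 / (2 * γ) + g p ≤ ‖w - y‖ ^ 2 / (2 * γ) + g w :=
      isMinOn_iff.mp hmin w (Set.mem_univ w)
    have hgw : g w ≤ (1 - t) * g p + t * g z := by
      have hconv := hg.2 (Set.mem_univ p) (Set.mem_univ z)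
        (by linarith [ht.2] : (0:ℝ) ≤ 1 - t) (le_of_lt ht.1) (by ring)
      have hpt : (1 - t) • p + t • z = p + t • (z - p) := by
        rw [sub_smul, smul_sub, one_smul]; abel
      rw [hpt] at hconv
      exact hconv
    have hwy : ‖w - y‖ ^ 2 = A + 2 * t * I + t ^ 2 * N := by
      have hsplit : w - y = (p - y) + t • (z - p) := by rw [hw]; abel
      rw [hsplit, norm_add_sq_real, real_inner_smul_right, norm_smul]
      rw [Real.norm_eq_abs, mul_pow, sq_abs]
      ring
    have hm2 : t * g p ≤ (2 * t * I + t ^ 2 * N) / (2 * γ) + t * g z := by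
      have he : (A + 2 * t * I + t ^ 2 * N) / (2 * γ)
          = A / (2 * γ) + (2 * t * I + t ^ 2 * N) / (2 * γ) := by ring
      have := hmin'.trans (by rw [hwy]; linarith [hgw] :
        ‖w - y‖ ^ 2 / (2 * γ) + g w ≤ (A + 2 * t * I + t ^ 2 * N) / (2 * γ)
          + ((1 - t) * g p + t * g z))
      rw [he] at this
      linarith
    have hdiv : g p ≤ (2 * I + t * N) / (2 * γ) + g z := by
      have he2 : (2 * t * I + t ^ 2 * N) / (2 * γ) + t * g z
          = t * ((2 * I + t * N) / (2 * γ) + g z) := by ring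
      rw [he2] at hm2
      exact le_of_mul_le_mul_left hm2 ht.1
    have he3 : (2 * I + t * N) / (2 * γ) = 2 * I / (2 * γ) + t * (N / (2 * γ)) := by ring
    rw [hzy]
    have he4 : (A + 2 * I + N) / (2 * γ) = A / (2 * γ) + 2 * I / (2 * γ) + N / (2 * γ) := by
      ring
    rw [he4]
    rw [he3] at hdiv
    linarith
  have hQ : (0:ℝ) ≤ N / (2 * γ) := div_nonneg (sq_nonneg _) h2γ.le
  have htend : Tendsto (fun t : ℝ => g z + ‖z - y‖ ^ 2 / (2 * γ) + t * (N / (2 * γ)))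
      (𝓝[>] 0) (𝓝 (g z + ‖z - y‖ ^ 2 / (2 * γ))) := by
    have : Continuous (fun t : ℝ => g z + ‖z - y‖ ^ 2 / (2 * γ) + t * (N / (2 * γ))) := by
      continuity
    have h0 := this.tendsto 0
    simp only [zero_mul, add_zero] at h0
    exact h0.mono_left nhdsWithin_le_nhds
  refine ge_of_tendsto htend ?_
  filter_upwards [Ioo_mem_nhdsGT_of_mem ⟨le_refl (0:ℝ), zero_lt_one⟩] with t ht
  exact key t ht

lemma pigd_key_ineq (f g : E → ℝ) (L γ' β' : ℝ) (hγ' : 0 < γ')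
    (xk xkm1 p z v : E)
    (hdesc : f p ≤ f xk + ⟪v, p - xk⟫ + L / 2 * ‖p - xk‖ ^ 2)
    (hconv : f xk + ⟪v, z - xk⟫ ≤ f z)
    (hP : g p + ‖p - (xk - γ' • v + β' • (xk - xkm1))‖ ^ 2 / (2 * γ')
        + ‖z - p‖ ^ 2 / (2 * γ')
      ≤ g z + ‖z - (xk - γ' • v + β' • (xk - xkm1))‖ ^ 2 / (2 * γ')) :
    f p + g p ≤ f z + g z + L / 2 * ‖p - xk‖ ^ 2
      + ⟪z - p, (p - xk) - β' • (xk - xkm1)⟫ / γ' := by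
  set y := xk - γ' • v + β' • (xk - xkm1) with hy
  have hid : ‖z - y‖ ^ 2 - ‖p - y‖ ^ 2 - ‖z - p‖ ^ 2 = 2 * ⟪z - p, p - y⟫ := by
    have hsplit : z - y = (z - p) + (p - y) := by abel
    rw [hsplit, norm_add_sq_real]; ring
  have hpy : p - y = (p - xk) + γ' • v - β' • (xk - xkm1) := by rw [hy]; abel
  have hinner : ⟪z - p, p - y⟫
      = ⟪z - p, (p - xk) - β' • (xk - xkm1)⟫ + γ' * ⟪v, z - p⟫ := by
    rw [hpy]
    rw [show (p - xk) + γ' • v - β' • (xk - xkm1)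
        = ((p - xk) - β' • (xk - xkm1)) + γ' • v by abel]
    rw [inner_add_right, real_inner_smul_right, real_inner_comm (z - p) v]
  have hzx : ⟪v, z - xk⟫ = ⟪v, z - p⟫ + ⟪v, p - xk⟫ := by
    rw [show z - xk = (z - p) + (p - xk) by abel, inner_add_right]
  have hgp : g p ≤ g z + ⟪z - p, p - y⟫ / γ' := by
    have : g p ≤ g z + (‖z - y‖ ^ 2 - ‖p - y‖ ^ 2 - ‖z - p‖ ^ 2) / (2 * γ') := by
      have he : (‖z - y‖ ^ 2 - ‖p - y‖ ^ 2 - ‖z - p‖ ^ 2) / (2 * γ')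
          = ‖z - y‖ ^ 2 / (2 * γ') - ‖p - y‖ ^ 2 / (2 * γ') - ‖z - p‖ ^ 2 / (2 * γ') := by
        ring
      rw [he]
      linarith [hP]
    rw [hid] at this
    have he2 : 2 * ⟪z - p, p - y⟫ / (2 * γ') = ⟪z - p, p - y⟫ / γ' := by
      field_simp
    rw [he2] at this
    exact this
  have hfin : ⟪z - p, p - y⟫ / γ'
      = ⟪z - p, (p - xk) - β' • (xk - xkm1)⟫ / γ' + ⟪v, z - p⟫ := by
    rw [hinner]
    field_simp
  rw [hfin] at hgp
  linarith

lemma pigd_twostep (h : ℕ → ℝ) (τ : ℝ) (hτ : 0 ≤ τ) (h10 : h 1 ≤ h 0)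
    (hstep : ∀ k, h (k + 2) ≤ τ * h k) : ∀ k, h k ≤ τ ^ (k / 2) * h 0 := by
  intro k
  induction k using Nat.strong_induction_on with
  | _ k ih =>
    match k with
    | 0 => simp
    | 1 => simpa using h10
    | (m + 2) =>
      have h2 := ih m (by omega)
      calc h (m + 2) ≤ τ * h m := hstep m
        _ ≤ τ * (τ ^ (m / 2) * h 0) := mul_le_mul_of_nonneg_left h2 hτ
        _ = τ ^ (m / 2 + 1) * h 0 := by ring
        _ = τ ^ ((m + 2) / 2) * h 0 := by rw [show (m + 2) / 2 = m / 2 + 1 by omega]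

set_option maxHeartbeats 1000000 in
/-- Theorem 3, linear convergence of PIGD under optimal strong convexity.
Under the PIGD setup, if `F` is coercive, `argmin F` is nonempty,
`0 < inf_k β_k ≤ β_k ≤ β_0 < 1`, and `F` satisfies the optimal strong convexity condition
`F(x) − min F ≥ ν‖x − x̄‖²` (where `x̄` is the projection of `x` onto `argmin F`) with
`ν > 0`, then `F(xᵏ) − min F ≤ C ωᵏ` for some `ω ∈ (0,1)` and `C > 0`. -/
theorem pigd_stmt6
    {n : ℕ} (f g F : EuclideanSpace ℝ (Fin n) → ℝ)
    (f' : EuclideanSpace ℝ (Fin n) → EuclideanSpace ℝ (Fin n))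
    (L c : ℝ) (hL : 0 < L) (hc0 : 0 < c) (hc1 : c < 1)
    (hfconv : ConvexOn ℝ Set.univ f)
    (hgconv : ConvexOn ℝ Set.univ g)
    (hgcont : Continuous g)
    (hf' : ∀ x, HasGradientAt f (f' x) x)
    (hlip : ∀ x y, ‖f' x - f' y‖ ≤ L * ‖x - y‖)
    (hF : ∀ x, F x = f x + g x)
    (hFbdd : BddBelow (Set.range F))
    (β γ : ℕ → ℝ)
    (hβnonneg : ∀ k, 0 ≤ β k)
    (hβmono : ∀ k, β (k + 1) ≤ β k)
    (hγ : ∀ k, γ k = 2 * (1 - β k) * c / L)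
    (prox : ℝ → EuclideanSpace ℝ (Fin n) → EuclideanSpace ℝ (Fin n))
    (hprox : ∀ (γ' : ℝ) (y : EuclideanSpace ℝ (Fin n)), 0 < γ' →
      IsMinOn (fun z => ‖z - y‖ ^ 2 / (2 * γ') + g z) Set.univ (prox γ' y))
    (x : ℤ → EuclideanSpace ℝ (Fin n))
    (hiter : ∀ k : ℕ,
      x (k + 1) = prox (γ k) (x k - γ k • f' (x k) + β k • (x k - x ((k : ℤ) - 1))))
    -- `argmin F` is nonempty and `F xstar = min F`
    (xstar : EuclideanSpace ℝ (Fin n)) (hxstar : ∀ y, F xstar ≤ F y)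
    (hβlt : ∀ k, β k < 1)
    -- `0 < inf_k β_k` and `β_k ≤ β_0 < 1`
    (b : ℝ) (hb : 0 < b) (hβlb : ∀ k, b ≤ β k) (hβub : ∀ k, β k ≤ β 0) (hβ0 : β 0 < 1)
    -- `F` is coercive
    (hcoer : Filter.Tendsto F (Filter.comap norm Filter.atTop) Filter.atTop)
    -- optimal strong convexity condition with constant `ν > 0`
    (ν : ℝ) (hν : 0 < ν)
    (hosc : ∀ z zbar : EuclideanSpace ℝ (Fin n),
      (∀ y, F zbar ≤ F y) → (∀ y, (∀ w, F y ≤ F w) → ‖z - zbar‖ ≤ ‖z - y‖) →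
        ν * ‖z - zbar‖ ^ 2 ≤ F z - F xstar) :
    ∃ ω : ℝ, 0 < ω ∧ ω < 1 ∧ ∃ C : ℝ, 0 < C ∧ ∀ k : ℕ, F (x k) - F xstar ≤ C * ω ^ k := by
  classical
  have hβ0pos : 0 < β 0 := lt_of_lt_of_le hb (hβlb 0)
  have h1β : ∀ k, 0 < 1 - β k := fun k => by linarith [hβlt k]
  have h1c : 0 < 1 - c := by linarith
  have hγpos : ∀ k, 0 < γ k := by
    intro k; rw [hγ k]
    have := h1β k
    positivity
  set γmin : ℝ := 2 * (1 - β 0) * c / L with hγmindef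
  have hγminpos : 0 < γmin := by
    rw [hγmindef]; have := h1β 0; positivity
  have hγge : ∀ k, γmin ≤ γ k := by
    intro k; rw [hγ k, hγmindef]
    have h1 := h1β 0
    gcongr
    linarith [hβub k]
  set θ : ℝ := L * (1 - c) / (2 * c) with hθdef
  have hθpos : 0 < θ := by rw [hθdef]; positivity
  set δ : ℕ → ℝ := fun k => β k * L / (4 * (1 - β k) * c) with hδdef
  have hδpos : ∀ k, 0 < δ k := by
    intro k; simp only [hδdef]
    have := h1β k; have := lt_of_lt_of_le hb (hβlb k)
    positivity
  have hδmono : ∀ k, δ (k + 1) ≤ δ k := by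
    intro k; simp only [hδdef]
    have h1 := h1β k; have h2 := h1β (k + 1); have h3 := hβmono k
    have h0 := hβnonneg (k + 1)
    rw [div_le_div_iff₀ (by positivity) (by positivity)]
    nlinarith [mul_pos hL hc0]
  set δmax : ℝ := β 0 * L / (4 * (1 - β 0) * c) with hδmaxdef
  clear_value γmin θ δ δmax
  have hδmaxpos : 0 < δmax := by
    rw [hδmaxdef]; have := h1β 0; positivity
  have hδle : ∀ k, δ k ≤ δmax := by
    intro k; simp only [hδdef, hδmaxdef]
    have h1 := h1β k; have h2 := h1β 0; have h3 := hβub k; have h0 := hβnonneg k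
    rw [div_le_div_iff₀ (by positivity) (by positivity)]
    nlinarith [mul_pos hL hc0]
  have hFge : ∀ w, 0 ≤ F w - F xstar := fun w => by linarith [hxstar w]
  -- the prox step is a minimizer
  have hmin : ∀ k : ℕ, IsMinOn (fun w =>
      ‖w - (x (k:ℤ) - γ k • f' (x (k:ℤ)) + β k • (x (k:ℤ) - x ((k:ℤ) - 1)))‖ ^ 2 / (2 * γ k)
        + g w) Set.univ (x ((k:ℤ) + 1)) := by
    intro k
    have h := hprox (γ k) (x (k:ℤ) - γ k • f' (x (k:ℤ)) + β k • (x (k:ℤ) - x ((k:ℤ) - 1)))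
      (hγpos k)
    have hp := hiter k
    push_cast at hp
    rw [hp]
    exact h
  -- the fundamental inequality
  have hkey : ∀ (k : ℕ) (w : EuclideanSpace ℝ (Fin n)),
      f (x ((k:ℤ)+1)) + g (x ((k:ℤ)+1)) ≤ f w + g w
        + L / 2 * ‖x ((k:ℤ)+1) - x (k:ℤ)‖ ^ 2
        + ⟪w - x ((k:ℤ)+1), (x ((k:ℤ)+1) - x (k:ℤ)) - β k • (x (k:ℤ) - x ((k:ℤ)-1))⟫ / γ k :=
    fun k w =>
      pigd_key_ineq f g L (γ k) (β k) (hγpos k) (x (k:ℤ)) (x ((k:ℤ)-1)) (x ((k:ℤ)+1)) w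
        (f' (x (k:ℤ)))
        (pigd_descent f f' L hL hf' hlip (x (k:ℤ)) (x ((k:ℤ)+1)))
        (pigd_convex_grad f hfconv (hf' (x (k:ℤ))) w)
        (pigd_prox_ineq g hgconv (hγpos k) (hmin k) w)
  -- sufficient decrease
  have R1 : ∀ k : ℕ, F (x ((k:ℤ)+1)) - F xstar + (δ k + θ) * ‖x ((k:ℤ)+1) - x (k:ℤ)‖ ^ 2
      ≤ F (x (k:ℤ)) - F xstar + δ k * ‖x (k:ℤ) - x ((k:ℤ)-1)‖ ^ 2 := by
    intro k
    have hk := hkey k (x (k:ℤ))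
    have hinr : ⟪x (k:ℤ) - x ((k:ℤ)+1), (x ((k:ℤ)+1) - x (k:ℤ)) - β k • (x (k:ℤ) - x ((k:ℤ)-1))⟫
        = -(‖x ((k:ℤ)+1) - x (k:ℤ)‖ ^ 2)
          + β k * ⟪x ((k:ℤ)+1) - x (k:ℤ), x (k:ℤ) - x ((k:ℤ)-1)⟫ := by
      rw [inner_sub_right, real_inner_smul_right,
        show x (k:ℤ) - x ((k:ℤ)+1) = -(x ((k:ℤ)+1) - x (k:ℤ)) by abel,
        inner_neg_left, inner_neg_left, real_inner_self_eq_norm_sq]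
      ring
    rw [hinr] at hk
    set A := ‖x ((k:ℤ)+1) - x (k:ℤ)‖ ^ 2 with hAdef
    set B := ‖x (k:ℤ) - x ((k:ℤ)-1)‖ ^ 2 with hBdef
    set ip := ⟪x ((k:ℤ)+1) - x (k:ℤ), x (k:ℤ) - x ((k:ℤ)-1)⟫ with hipdef
    have hip2 : ip ≤ (A + B) / 2 := by
      have h1 := real_inner_le_norm (x ((k:ℤ)+1) - x (k:ℤ)) (x (k:ℤ) - x ((k:ℤ)-1))
      nlinarith [sq_nonneg (‖x ((k:ℤ)+1) - x (k:ℤ)‖ - ‖x (k:ℤ) - x ((k:ℤ)-1)‖), hAdef, hBdef,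
        hipdef, h1]
    have hnum : -A + β k * ip ≤ -A + β k * ((A + B) / 2) := by
      have := mul_le_mul_of_nonneg_left hip2 (hβnonneg k)
      linarith
    have hstep1 : (-A + β k * ip) / γ k ≤ (-A + β k * ((A + B) / 2)) / γ k :=
      (div_le_div_iff_of_pos_right (hγpos k)).mpr hnum
    have hstep2 : (-A + β k * ((A + B) / 2)) / γ k
        = -(L/2)*A - (δ k + θ)*A + δ k * B := by
      rw [hγ k]; simp only [hδdef, hθdef]
      have h1 := h1β k
      field_simp
      ring
    rw [hF (x ((k:ℤ)+1)), hF (x (k:ℤ))]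
    linarith [hk, hstep1.trans_eq hstep2]
  -- continuity of F, closedness of argmin
  have hfc : Continuous f := by
    refine continuous_iff_continuousAt.mpr fun w => ?_
    exact ((hf' w).hasFDerivAt.differentiableAt).continuousAt
  have hFcont : Continuous F := by
    have hFeq : F = fun w => f w + g w := funext hF
    rw [hFeq]; exact hfc.add hgcont
  have hSclosed : IsClosed {w : EuclideanSpace ℝ (Fin n) | ∀ v, F w ≤ F v} := by
    have hSeq : {w : EuclideanSpace ℝ (Fin n) | ∀ v, F w ≤ F v}
        = F ⁻¹' Set.Iic (F xstar) := by
      ext w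
      constructor
      · intro h; exact h xstar
      · intro h v; exact le_trans h (hxstar v)
    rw [hSeq]
    exact IsClosed.preimage hFcont isClosed_Iic
  set K : ℝ := L + 2 / (ν * γmin ^ 2) with hKdef
  clear_value K
  have hKpos : 0 < K := by rw [hKdef]; positivity
  -- error bound inequality
  have R2 : ∀ k : ℕ, F (x ((k:ℤ)+1)) - F xstar
      ≤ K * (‖x ((k:ℤ)+1) - x (k:ℤ)‖ ^ 2 + ‖x (k:ℤ) - x ((k:ℤ)-1)‖ ^ 2) := by
    intro k
    obtain ⟨zbar, hzbarS, hdist⟩ :=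
      hSclosed.exists_infDist_eq_dist ⟨xstar, hxstar⟩ (x ((k:ℤ)+1))
    have hnear : ∀ w, (∀ v, F w ≤ F v) → ‖x ((k:ℤ)+1) - zbar‖ ≤ ‖x ((k:ℤ)+1) - w‖ := by
      intro w hw
      rw [← dist_eq_norm, ← dist_eq_norm, ← hdist]
      exact Metric.infDist_le_dist_of_mem hw
    have hosc' := hosc (x ((k:ℤ)+1)) zbar hzbarS hnear
    have hFzbar : F zbar = F xstar := le_antisymm (hzbarS xstar) (hxstar zbar)
    have hk := hkey k zbar
    have hddnn : (0:ℝ) ≤ ‖x ((k:ℤ)+1) - x (k:ℤ)‖ := norm_nonneg _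
    have huunn : (0:ℝ) ≤ ‖x (k:ℤ) - x ((k:ℤ)-1)‖ := norm_nonneg _
    have hrnn : (0:ℝ) ≤ ‖x ((k:ℤ)+1) - zbar‖ := norm_nonneg _
    have hinb : ⟪zbar - x ((k:ℤ)+1), (x ((k:ℤ)+1) - x (k:ℤ)) - β k • (x (k:ℤ) - x ((k:ℤ)-1))⟫
        ≤ ‖x ((k:ℤ)+1) - zbar‖ * (‖x ((k:ℤ)+1) - x (k:ℤ)‖ + ‖x (k:ℤ) - x ((k:ℤ)-1)‖) := by
      have h1 := real_inner_le_norm (zbar - x ((k:ℤ)+1))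
        ((x ((k:ℤ)+1) - x (k:ℤ)) - β k • (x (k:ℤ) - x ((k:ℤ)-1)))
      have h2 : ‖(x ((k:ℤ)+1) - x (k:ℤ)) - β k • (x (k:ℤ) - x ((k:ℤ)-1))‖
          ≤ ‖x ((k:ℤ)+1) - x (k:ℤ)‖ + ‖x (k:ℤ) - x ((k:ℤ)-1)‖ := by
        refine le_trans (norm_sub_le _ _) ?_
        have h3 : ‖β k • (x (k:ℤ) - x ((k:ℤ)-1))‖ = β k * ‖x (k:ℤ) - x ((k:ℤ)-1)‖ := by
          rw [norm_smul, Real.norm_eq_abs, abs_of_nonneg (hβnonneg k)]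
        have h4 : β k * ‖x (k:ℤ) - x ((k:ℤ)-1)‖ ≤ ‖x (k:ℤ) - x ((k:ℤ)-1)‖ := by
          nlinarith [hβlt k, hβnonneg k, huunn]
        linarith [h3.le, h3.ge]
      have h5 : ‖zbar - x ((k:ℤ)+1)‖ = ‖x ((k:ℤ)+1) - zbar‖ := norm_sub_rev _ _
      calc ⟪zbar - x ((k:ℤ)+1), (x ((k:ℤ)+1) - x (k:ℤ)) - β k • (x (k:ℤ) - x ((k:ℤ)-1))⟫
          ≤ ‖zbar - x ((k:ℤ)+1)‖
            * ‖(x ((k:ℤ)+1) - x (k:ℤ)) - β k • (x (k:ℤ) - x ((k:ℤ)-1))‖ := h1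
        _ ≤ ‖x ((k:ℤ)+1) - zbar‖
            * (‖x ((k:ℤ)+1) - x (k:ℤ)‖ + ‖x (k:ℤ) - x ((k:ℤ)-1)‖) := by
            rw [h5]
            exact mul_le_mul_of_nonneg_left h2 hrnn
    have hdiv1 : ⟪zbar - x ((k:ℤ)+1),
          (x ((k:ℤ)+1) - x (k:ℤ)) - β k • (x (k:ℤ) - x ((k:ℤ)-1))⟫ / γ k
        ≤ ‖x ((k:ℤ)+1) - zbar‖
            * (‖x ((k:ℤ)+1) - x (k:ℤ)‖ + ‖x (k:ℤ) - x ((k:ℤ)-1)‖) / γmin := by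
      have hXnn : (0:ℝ) ≤ ‖x ((k:ℤ)+1) - zbar‖
          * (‖x ((k:ℤ)+1) - x (k:ℤ)‖ + ‖x (k:ℤ) - x ((k:ℤ)-1)‖) := by positivity
      calc ⟪zbar - x ((k:ℤ)+1), (x ((k:ℤ)+1) - x (k:ℤ)) - β k • (x (k:ℤ) - x ((k:ℤ)-1))⟫ / γ k
          ≤ ‖x ((k:ℤ)+1) - zbar‖
              * (‖x ((k:ℤ)+1) - x (k:ℤ)‖ + ‖x (k:ℤ) - x ((k:ℤ)-1)‖) / γ k :=
            (div_le_div_iff_of_pos_right (hγpos k)).mpr hinb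
        _ ≤ _ := div_le_div_of_nonneg_left hXnn hγminpos (hγge k)
    -- abbreviate
    set s := F (x ((k:ℤ)+1)) - F xstar with hsdef
    set dd := ‖x ((k:ℤ)+1) - x (k:ℤ)‖ with hdd
    set uu := ‖x (k:ℤ) - x ((k:ℤ)-1)‖ with huu
    set r := ‖x ((k:ℤ)+1) - zbar‖ with hrdef
    -- from hk : F p ≤ F zbar + ...
    have hk2 : s ≤ L / 2 * dd ^ 2 + r * (dd + uu) / γmin := by
      have e1 : F (x ((k:ℤ)+1)) = f (x ((k:ℤ)+1)) + g (x ((k:ℤ)+1)) := hF _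
      have e2 : F zbar = f zbar + g zbar := hF _
      rw [hsdef]
      rw [e1, ← hFzbar, e2]
      linarith [hk, hdiv1]
    have hr2 : ν * r ^ 2 ≤ s := hosc'
    have hyoung : r * (dd + uu) / γmin
        ≤ ν / 2 * r ^ 2 + (dd + uu) ^ 2 / (2 * ν * γmin ^ 2) := by
      have hpos : (0:ℝ) < 2 * ν * γmin ^ 2 := by positivity
      have heq : ν / 2 * r ^ 2 + (dd + uu) ^ 2 / (2 * ν * γmin ^ 2) - r * (dd + uu) / γmin
          = (ν * γmin * r - (dd + uu)) ^ 2 / (2 * ν * γmin ^ 2) := by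
        field_simp
        ring
      have hge := div_nonneg (sq_nonneg (ν * γmin * r - (dd + uu))) hpos.le
      linarith [heq ▸ hge]
    have hsq : (dd + uu) ^ 2 / (2 * ν * γmin ^ 2) ≤ (dd ^ 2 + uu ^ 2) / (ν * γmin ^ 2) := by
      rw [div_le_div_iff₀ (by positivity) (by positivity)]
      nlinarith [mul_nonneg (sq_nonneg (dd - uu)) (mul_pos hν (pow_pos hγminpos 2)).le]
    have hfinal : s ≤ L * dd ^ 2 + 2 * ((dd ^ 2 + uu ^ 2) / (ν * γmin ^ 2)) := by
      linarith [hk2, hr2, hyoung, hsq]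
    have hKe : K * (dd ^ 2 + uu ^ 2)
        = L * (dd ^ 2 + uu ^ 2) + 2 * ((dd ^ 2 + uu ^ 2) / (ν * γmin ^ 2)) := by
      rw [hKdef]
      field_simp
    have huu2 : (0:ℝ) ≤ uu ^ 2 := sq_nonneg _
    have hLu : L * dd ^ 2 ≤ L * (dd ^ 2 + uu ^ 2) := by nlinarith [mul_nonneg hL.le huu2]
    calc s ≤ L * dd ^ 2 + 2 * ((dd ^ 2 + uu ^ 2) / (ν * γmin ^ 2)) := hfinal
      _ ≤ L * (dd ^ 2 + uu ^ 2) + 2 * ((dd ^ 2 + uu ^ 2) / (ν * γmin ^ 2)) := by linarith [hLu]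
      _ = K * (dd ^ 2 + uu ^ 2) := hKe.symm
  -- move to ℕ indexing
  set z : ℕ → EuclideanSpace ℝ (Fin n) := fun k => x ((k : ℤ) - 1) with hzdef
  clear_value z
  have hz1 : ∀ k : ℕ, z (k + 1) = x (k : ℤ) := by
    intro k; simp only [hzdef]; congr 1; push_cast; ring
  have hz2 : ∀ k : ℕ, z (k + 2) = x ((k : ℤ) + 1) := by
    intro k; simp only [hzdef]; congr 1; push_cast; ring
  have R1' : ∀ k : ℕ, F (z (k+2)) - F xstar + (δ k + θ) * ‖z (k+2) - z (k+1)‖ ^ 2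
      ≤ F (z (k+1)) - F xstar + δ k * ‖z (k+1) - z k‖ ^ 2 := by
    intro k
    have hzk : z k = x ((k:ℤ) - 1) := by rw [hzdef]
    rw [hz2 k, hz1 k, hzk]
    exact R1 k
  have R2' : ∀ k : ℕ, F (z (k+2)) - F xstar
      ≤ K * (‖z (k+2) - z (k+1)‖ ^ 2 + ‖z (k+1) - z k‖ ^ 2) := by
    intro k
    have hzk : z k = x ((k:ℤ) - 1) := by rw [hzdef]
    rw [hz2 k, hz1 k, hzk]
    exact R2 k
  -- Lyapunov function
  set H : ℕ → ℝ := fun k => F (z (k+2)) - F xstar + δ k * ‖z (k+2) - z (k+1)‖ ^ 2 with hHdef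
  clear_value H
  have hHnn : ∀ k, 0 ≤ H k := by
    intro k
    simp only [hHdef]
    have := hFge (z (k+2))
    have := sq_nonneg ‖z (k+2) - z (k+1)‖
    nlinarith [hδpos k]
  have hL1 : ∀ k, H (k+1) + θ * ‖z (k+3) - z (k+2)‖ ^ 2 ≤ H k := by
    intro k
    have h := R1' (k+1)
    have e1 : k + 1 + 2 = k + 3 := rfl
    have e2 : k + 1 + 1 = k + 2 := rfl
    rw [e1, e2] at h
    have hmul : δ (k+1) * ‖z (k+2) - z (k+1)‖ ^ 2 ≤ δ k * ‖z (k+2) - z (k+1)‖ ^ 2 :=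
      mul_le_mul_of_nonneg_right (hδmono k) (sq_nonneg _)
    simp only [hHdef]
    have e3 : k + 1 + 2 = k + 3 := rfl
    rw [e3]
    linarith [h, hmul]
  have hHmono : ∀ k, H (k+1) ≤ H k := by
    intro k
    have := hL1 k
    nlinarith [sq_nonneg ‖z (k+3) - z (k+2)‖, hθpos]
  set ρ : ℝ := (K + δmax) / θ with hρdef
  clear_value ρ
  have hρpos : 0 < ρ := by rw [hρdef]; positivity
  set τ : ℝ := ρ / (1 + ρ) with hτdef
  clear_value τ
  have hτpos : 0 < τ := by rw [hτdef]; positivity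
  have hτlt : τ < 1 := by
    rw [hτdef, div_lt_one (by linarith)]
    linarith
  have hcontr : ∀ k, H (k+2) ≤ τ * H k := by
    intro k
    have ha := hL1 (k+1)
    have hb' := hL1 k
    have e1 : k + 1 + 1 = k + 2 := rfl
    have e2 : k + 1 + 3 = k + 4 := rfl
    rw [e1, e2] at ha
    have hr2 := R2' (k+2)
    have e3 : k + 2 + 2 = k + 4 := rfl
    have e4 : k + 2 + 1 = k + 3 := rfl
    rw [e3, e4] at hr2
    set a := ‖z (k+4) - z (k+3)‖ ^ 2 with hadef
    set b' := ‖z (k+3) - z (k+2)‖ ^ 2 with hbdef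
    have hann : 0 ≤ a := by rw [hadef]; positivity
    have hbnn : 0 ≤ b' := by rw [hbdef]; positivity
    -- H (k+2) ≤ (K + δmax) * (a + b')
    have hup : H (k+2) ≤ (K + δmax) * (a + b') := by
      simp only [hHdef]
      rw [e3, e4]
      rw [← hadef]
      have h6 : δ (k+2) * a ≤ δmax * a := mul_le_mul_of_nonneg_right (hδle (k+2)) hann
      linarith [hr2, h6, mul_nonneg hδmaxpos.le hbnn]
    -- θ * (a + b') ≤ H k - H (k+2)
    have hdown : θ * (a + b') ≤ H k - H (k+2) := by
      have h7 : θ * a ≤ H (k+1) - H (k+2) := by linarith [ha]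
      have h8 : θ * b' ≤ H k - H (k+1) := by linarith [hb']
      linarith
    have h9 : (K + δmax) * (a + b') = ρ * (θ * (a + b')) := by
      rw [hρdef]; field_simp
    have h10 : H (k+2) ≤ ρ * (H k - H (k+2)) := by
      calc H (k+2) ≤ (K + δmax) * (a + b') := hup
        _ = ρ * (θ * (a + b')) := h9
        _ ≤ ρ * (H k - H (k+2)) := mul_le_mul_of_nonneg_left hdown hρpos.le
    have h11 : H (k+2) * (1 + ρ) ≤ ρ * H k := by nlinarith [h10]
    rw [hτdef]
    rw [div_mul_eq_mul_div, le_div_iff₀ (by linarith)]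
    linarith [h11]
  -- two-step contraction gives geometric decay
  have hgeo := pigd_twostep H τ hτpos.le (hHmono 0) hcontr
  obtain ⟨ω, hω0, hω1, hω2⟩ : ∃ ω : ℝ, 0 < ω ∧ ω < 1 ∧ ω ^ 2 = τ := by
    refine ⟨Real.sqrt τ, Real.sqrt_pos.mpr hτpos, ?_, Real.sq_sqrt hτpos.le⟩
    rw [show (1:ℝ) = Real.sqrt 1 by rw [Real.sqrt_one]]
    exact Real.sqrt_lt_sqrt hτpos.le hτlt
  have hHbound : ∀ k, H k ≤ ω ^ (k - 1) * H 0 := by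
    intro k
    have h1 := hgeo k
    have h2 : τ ^ (k / 2) ≤ ω ^ (k - 1) := by
      rw [← hω2, ← pow_mul]
      exact pow_le_pow_of_le_one hω0.le hω1.le (by omega)
    calc H k ≤ τ ^ (k / 2) * H 0 := h1
      _ ≤ ω ^ (k - 1) * H 0 := mul_le_mul_of_nonneg_right h2 (hHnn 0)
  refine ⟨ω, hω0, hω1, ?_⟩
  have hs0 : 0 ≤ F (z 1) - F xstar := hFge _
  set C : ℝ := (H 0 + (F (z 1) - F xstar) + 1) / ω ^ 2 with hCdef
  clear_value C
  have hCpos : 0 < C := by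
    rw [hCdef]
    have := hHnn 0
    positivity
  refine ⟨C, hCpos, ?_⟩
  intro k
  have hxz : F (x (k:ℤ)) = F (z (k+1)) := by rw [hz1 k]
  rw [hxz]
  match k with
  | 0 =>
    have hω2le : ω ^ 2 ≤ 1 := by nlinarith [hω0, hω1]
    have : H 0 + (F (z 1) - F xstar) + 1 ≤ C := by
      rw [hCdef, le_div_iff₀ (by positivity)]
      nlinarith [hHnn 0, hs0, hω2le]
    simpa using le_trans (by linarith [hHnn 0] : F (z 1) - F xstar ≤ H 0 + (F (z 1) - F xstar) + 1) this
  | (m+1) =>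
    have h1 : F (z (m+2)) - F xstar ≤ H m := by
      simp only [hHdef]
      nlinarith [sq_nonneg ‖z (m+2) - z (m+1)‖, hδpos m]
    have h2 := hHbound m
    have hX : ω ^ (m - 1) ≤ ω ^ (m + 1) / ω ^ 2 := by
      rw [le_div_iff₀ (by positivity), ← pow_add]
      exact pow_le_pow_of_le_one hω0.le hω1.le (by omega)
    have h3 : ω ^ (m - 1) * H 0
        ≤ (ω ^ (m + 1) / ω ^ 2) * (H 0 + (F (z 1) - F xstar) + 1) := by
      apply mul_le_mul hX (by linarith [hs0]) (hHnn 0) (by positivity)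
    have h4 : (ω ^ (m + 1) / ω ^ 2) * (H 0 + (F (z 1) - F xstar) + 1) = C * ω ^ (m+1) := by
      rw [hCdef]; ring
    linarith [h1, h2, h3, h4.le, h4.ge]
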